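/- arXiv:2005.13719 — 2 statements merged into one kernel-verified Lean document; each statement's English description precedes it below -/
import Mathlib

section
/- Suppose that no minimizer of L over W₁ belongs to W_conv. Then every minimizer ω̂ of L over W_conv (which exists since W_conv is compact and L is continuous) has at least one zero entry, i.e., there exists i ∈ {2,…,N} with ω̂ᵢ = 0. (Theorem 1: the convex hull restriction of the synthetic control method yields a sparse weight vector.) -/
open Matrix Finset

lemma quad_expand {d : ℕ} (V : Matrix (Fin d) (Fin d) ℝ) (hV : Vᵀ = V)
    (a w : Fin d → ℝ) (t : ℝ) :
    (a - t • w) ⬝ᵥ V.mulVec (a - t • w)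
      = a ⬝ᵥ V.mulVec a - 2*t*(a ⬝ᵥ V.mulVec w) + t^2*(w ⬝ᵥ V.mulVec w) := by
  have hsym : w ⬝ᵥ V.mulVec a = a ⬝ᵥ V.mulVec w := by
    rw [Matrix.dotProduct_mulVec, ← Matrix.mulVec_transpose, hV, dotProduct_comm]
  simp only [sub_dotProduct, dotProduct_sub, Matrix.mulVec_sub, Matrix.mulVec_smul,
    smul_dotProduct, dotProduct_smul, smul_eq_mul, hsym]
  ring

/-- **Theorem 1** (sparsity of the convex-hull-constrained synthetic control weights).
Indices `i : Fin (N-1)` represent the donor units `2, …, N`; `X i` is the predictor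
vector of donor `i` and `X₁` that of the treated unit.  If no minimizer of the loss
`L` over the affine set `W₁ = {ω : ∑ ωᵢ = 1}` lies in the convex hull constraint set
`W_conv = {ω : ωᵢ ≥ 0, ∑ ωᵢ = 1}`, then every minimizer of `L` over `W_conv`
has at least one zero entry. -/
theorem convex_hull_restriction_sparsity
    (d N : ℕ) (hd : 1 ≤ d) (hN : 3 ≤ N)
    (X₁ : Fin d → ℝ) (X : Fin (N - 1) → Fin d → ℝ)
    (V : Matrix (Fin d) (Fin d) ℝ) (hV : V.PosDef)
    (L : (Fin (N - 1) → ℝ) → ℝ)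
    (hL : ∀ ω, L ω =
      (X₁ - ∑ i, ω i • X i) ⬝ᵥ V.mulVec (X₁ - ∑ i, ω i • X i))
    (W₁ Wconv : Set (Fin (N - 1) → ℝ))
    (hW₁ : W₁ = {ω | ∑ i, ω i = 1})
    (hWconv : Wconv = {ω | (∀ i, 0 ≤ ω i) ∧ ∑ i, ω i = 1})
    (hno : ∀ ω ∈ W₁, (∀ η ∈ W₁, L ω ≤ L η) → ω ∉ Wconv)
    (ωhat : Fin (N - 1) → ℝ)
    (hmem : ωhat ∈ Wconv) (hmin : ∀ η ∈ Wconv, L ωhat ≤ L η) :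
    ∃ i, ωhat i = 0 := by
  by_contra hcon
  push_neg at hcon
  rw [hWconv] at hmem
  obtain ⟨hnn, hsum⟩ := hmem
  have hpos : ∀ i, 0 < ωhat i := fun i => lt_of_le_of_ne (hnn i) (Ne.symm (hcon i))
  have hne : (Finset.univ : Finset (Fin (N - 1))).Nonempty := by
    refine univ_nonempty_iff.mpr ?_
    have : 0 < N - 1 := by omega
    exact ⟨⟨0, this⟩⟩
  have hVt : Vᵀ = V := by simpa using hV.1.eq
  -- show ωhat is a global minimizer over W₁
  have hglob : ∀ η ∈ W₁, L ωhat ≤ L η := by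
    intro η hη
    rw [hW₁] at hη
    set w : Fin (N - 1) → ℝ := fun i => η i - ωhat i with hw
    set a : Fin d → ℝ := X₁ - ∑ i, ωhat i • X i with ha
    set sw : Fin d → ℝ := ∑ i, w i • X i with hsw
    set s : ℝ := a ⬝ᵥ V.mulVec sw with hs
    set c : ℝ := sw ⬝ᵥ V.mulVec sw with hc
    have hcnn : 0 ≤ c := by simpa using hV.posSemidef.dotProduct_mulVec_nonneg sw
    -- residual along the segment
    have hres : ∀ t : ℝ, X₁ - ∑ i, (ωhat i + t * w i) • X i = a - t • sw := by
      intro t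
      have : ∑ i, (ωhat i + t * w i) • X i
          = (∑ i, ωhat i • X i) + t • ∑ i, w i • X i := by
        rw [Finset.smul_sum, ← Finset.sum_add_distrib]
        refine Finset.sum_congr rfl fun i _ => ?_
        rw [add_smul, smul_smul]
      rw [this, ha, hsw]
      abel
    -- L along the segment
    have hLt : ∀ t : ℝ, L (fun i => ωhat i + t * w i)
        = a ⬝ᵥ V.mulVec a - 2*t*s + t^2*c := by
      intro t
      rw [hL, hres t, quad_expand V hVt a sw t]
    -- admissible step size
    set M : ℝ := Finset.univ.sup' hne (fun i => |w i|) with hM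
    have hMnn : 0 ≤ M :=
      le_trans (abs_nonneg (w hne.choose))
        (Finset.le_sup' (fun i => |w i|) (mem_univ hne.choose))
    set m : ℝ := Finset.univ.inf' hne ωhat with hm
    have hmpos : 0 < m := by
      rw [hm, Finset.lt_inf'_iff]
      exact fun i _ => hpos i
    set t₀ : ℝ := m / (M + 1) with ht₀
    have ht₀pos : 0 < t₀ := div_pos hmpos (by linarith)
    -- for 0 < t ≤ t₀, the point is in Wconv
    have hmemt : ∀ t : ℝ, 0 < t → t ≤ t₀ → (fun i => ωhat i + t * w i) ∈ Wconv := by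
      intro t ht htle
      rw [hWconv]
      constructor
      · intro i
        show (0:ℝ) ≤ ωhat i + t * w i
        have h1 : |w i| ≤ M := by
          rw [hM]; exact Finset.le_sup' (fun j => |w j|) (mem_univ i)
        have h2 : m ≤ ωhat i := Finset.inf'_le _ (mem_univ i)
        have h3 : t * |w i| ≤ t₀ * M :=
          mul_le_mul htle h1 (abs_nonneg _) (le_of_lt ht₀pos)
        have h4 : t₀ * M < m := by
          rw [ht₀, div_mul_eq_mul_div, div_lt_iff₀ (by linarith : (0:ℝ) < M + 1)]
          nlinarith
        have h5 : -(t * w i) ≤ t * |w i| := by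
          calc -(t * w i) ≤ |t * w i| := neg_le_abs _
            _ = t * |w i| := by rw [abs_mul, abs_of_pos ht]
        nlinarith
      · have : ∑ i, (ωhat i + t * w i) = (∑ i, ωhat i) + t * ((∑ i, η i) - ∑ i, ωhat i) := by
          rw [Finset.sum_add_distrib, ← Finset.mul_sum, hw]
          simp [Finset.sum_sub_distrib]
        rw [this, hsum, hη]
        ring
    -- hence for 0 < t ≤ t₀ : 0 ≤ -2s + t*c
    have hkey : ∀ t : ℝ, 0 < t → t ≤ t₀ → 0 ≤ -2*s + t*c := by
      intro t ht htle
      have := hmin _ (hmemt t ht htle)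
      rw [hLt t] at this
      have h0 : L ωhat = a ⬝ᵥ V.mulVec a := by rw [hL, ha]
      rw [h0] at this
      have : 0 ≤ -2*t*s + t^2*c := by linarith
      nlinarith
    -- conclude s ≤ 0
    have hsle : s ≤ 0 := by
      by_contra hs'
      push_neg at hs'
      rcases eq_or_lt_of_le hcnn with hc0 | hcpos
      · have := hkey t₀ ht₀pos le_rfl
        rw [← hc0] at this
        linarith
      · set t : ℝ := min t₀ (s / c) with htdef
        have htpos : 0 < t := lt_min ht₀pos (div_pos hs' hcpos)
        have htle : t ≤ t₀ := min_le_left _ _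
        have h1 := hkey t htpos htle
        have h2 : t * c ≤ s := by
          have : t ≤ s / c := min_le_right _ _
          calc t * c ≤ (s / c) * c := by nlinarith
            _ = s := div_mul_cancel₀ s (ne_of_gt hcpos)
        linarith
    have hη1 : (fun i => ωhat i + 1 * w i) = η := by
      funext i; simp [hw]
    have hLη : L η = a ⬝ᵥ V.mulVec a - 2*1*s + 1^2*c := by
      rw [← hη1, hLt 1]
    have hL0 : L ωhat = a ⬝ᵥ V.mulVec a := by rw [hL, ha]
    rw [hLη, hL0]
    nlinarith
  exact hno ωhat (by rw [hW₁]; exact hsum) hglob (by rw [hWconv]; exact ⟨hnn, hsum⟩)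
end

section
/- Suppose that no minimizer of L over W₂ belongs to W_ps-conv. Then every minimizer ω̂ of L over W_ps-conv has at least one zero entry among its last N−1 coordinates, i.e., there exists i ∈ {2,…,N} with ω̂ᵢ = 0. (Theorem 2: the parallelly shiftable convex hull restriction still yields a sparse weight vector.) -/
open Matrix Finset

/-- **Theorem 2** (sparsity of the parallelly shiftable convex-hull-constrained
synthetic control weights).  The weight vector `ω : Fin N → ℝ` has intercept `ω 0`
(i.e. `ω₁`) and donor weights `ω i` for `i ≠ 0` (i.e. `ω₂, …, ω_N`); `X₀` is the
`d × N` matrix whose columns are `X₀₁, X₂, …, X_N`.  If no minimizer of the loss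
`L(ω) = (X₁ − X₀ω)ᵀ V (X₁ − X₀ω)` over `W₂ = {ω : ∑_{i≠0} ωᵢ = 1}` lies in
`W_ps-conv = {ω : ωᵢ ≥ 0 for i ≠ 0, ∑_{i≠0} ωᵢ = 1}`, then every minimizer of `L`
over `W_ps-conv` has at least one zero entry among its last `N−1` coordinates. -/
theorem ps_convex_hull_restriction_sparsity
    (d N : ℕ) (hd : 1 ≤ d) (hN : 3 ≤ N)
    (X₁ : Fin d → ℝ) (X₀ : Matrix (Fin d) (Fin N) ℝ)
    (V : Matrix (Fin d) (Fin d) ℝ) (hV : V.PosDef)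
    (L : (Fin N → ℝ) → ℝ)
    (hL : ∀ ω, L ω = (X₁ - X₀.mulVec ω) ⬝ᵥ V.mulVec (X₁ - X₀.mulVec ω))
    (W₂ Wps : Set (Fin N → ℝ))
    (hW₂ : W₂ = {ω | ∑ i ∈ Finset.univ.erase ⟨0, by omega⟩, ω i = 1})
    (hWps : Wps = {ω | (∀ i, i ≠ ⟨0, by omega⟩ → 0 ≤ ω i) ∧ ∑ i ∈ Finset.univ.erase ⟨0, by omega⟩, ω i = 1})
    (hno : ∀ ω ∈ W₂, (∀ η ∈ W₂, L ω ≤ L η) → ω ∉ Wps)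
    (ωhat : Fin N → ℝ)
    (hmem : ωhat ∈ Wps) (hmin : ∀ η ∈ Wps, L ωhat ≤ L η) :
    ∃ i, i ≠ ⟨0, by omega⟩ ∧ ωhat i = 0 := by
  by_contra hcon
  push_neg at hcon
  set z : Fin N := ⟨0, by omega⟩ with hz
  set S : Finset (Fin N) := Finset.univ.erase z with hSdef
  have hmem' := hmem
  rw [hWps] at hmem'
  obtain ⟨hnn, hsum⟩ := hmem'
  have hpos : ∀ i ∈ S, 0 < ωhat i := by
    intro i hi
    have hiz : i ≠ z := (Finset.mem_erase.mp hi).1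
    exact lt_of_le_of_ne (hnn i hiz) (Ne.symm (hcon i hiz))
  -- ωhat ∈ W₂
  have hW2mem : ωhat ∈ W₂ := by rw [hW₂]; exact hsum
  refine hno ωhat hW2mem ?_ hmem
  intro η hη
  rw [hW₂] at hη
  -- set up
  set u : Fin N → ℝ := η - ωhat with hu
  have husum : ∑ i ∈ S, u i = 0 := by
    simp only [hu, Pi.sub_apply, Finset.sum_sub_distrib]
    rw [hη, hsum]; ring
  have hSne : S.Nonempty := ⟨⟨1, by omega⟩, by
    simp [hSdef, Finset.mem_erase, hz, Fin.ext_iff]⟩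
  set ε : ℝ := S.inf' hSne ωhat with hε
  have hεpos : 0 < ε := by
    rw [hε, Finset.lt_inf'_iff]; exact hpos
  set M : ℝ := S.sup' hSne (fun i => |u i|) with hM
  have hMnn : 0 ≤ M := by
    obtain ⟨i, hi⟩ := hSne
    exact le_trans (abs_nonneg (u i)) (Finset.le_sup' (fun i => |u i|) hi)
  set t : ℝ := min 1 (ε / (M + 1)) with ht
  have ht0 : 0 < t := lt_min one_pos (div_pos hεpos (by linarith))
  have ht1 : t ≤ 1 := min_le_left _ _
  have htM : ∀ i ∈ S, t * |u i| < ε := by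
    intro i hi
    have h1 : |u i| ≤ M := Finset.le_sup' (fun i => |u i|) hi
    have h2 : t ≤ ε / (M + 1) := min_le_right _ _
    have h3 : t * |u i| ≤ (ε / (M + 1)) * M :=
      mul_le_mul h2 h1 (abs_nonneg _) (le_of_lt (div_pos hεpos (by linarith)))
    have h4 : (ε / (M + 1)) * M < ε := by
      rw [div_mul_eq_mul_div, div_lt_iff₀ (by linarith : (0:ℝ) < M + 1)]
      nlinarith
    linarith
  -- the perturbed point
  set ω' : Fin N → ℝ := ωhat + t • u with hω'
  have hω'mem : ω' ∈ Wps := by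
    rw [hWps]
    constructor
    · intro i hiz
      have hiS : i ∈ S := Finset.mem_erase.mpr ⟨hiz, Finset.mem_univ i⟩
      have h1 : ε ≤ ωhat i := Finset.inf'_le _ hiS
      have h2 : -(t * |u i|) ≤ t * u i := by
        nlinarith [neg_abs_le (u i), ht0.le]
      have h3 := htM i hiS
      simp only [hω', Pi.add_apply, Pi.smul_apply, smul_eq_mul]
      linarith
    · simp only [hω', Pi.add_apply, Pi.smul_apply, smul_eq_mul]
      rw [Finset.sum_add_distrib, ← Finset.mul_sum, husum, hsum]; ring
  have hkey := hmin ω' hω'mem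
  -- algebra
  set v : Fin d → ℝ := X₁ - X₀.mulVec ωhat with hv
  set w : Fin d → ℝ := X₀.mulVec u with hw
  have hηv : X₁ - X₀.mulVec η = v - w := by
    have : η = ωhat + u := by simp [hu]
    rw [this, Matrix.mulVec_add, hv, hw]; abel
  have hω'v : X₁ - X₀.mulVec ω' = v - t • w := by
    rw [hω', Matrix.mulVec_add, Matrix.mulVec_smul, hv, hw]; abel
  set a : ℝ := w ⬝ᵥ V.mulVec v with ha
  set c : ℝ := w ⬝ᵥ V.mulVec w with hc
  have hsym : v ⬝ᵥ V.mulVec w = a := by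
    have hVt : Vᵀ = V := by
      have := hV.isHermitian.eq
      simpa [Matrix.conjTranspose_eq_transpose_of_trivial] using this
    rw [Matrix.dotProduct_mulVec, ← Matrix.mulVec_transpose, hVt, ha,
      dotProduct_comm]
  have hcnn : 0 ≤ c := by
    have := hV.posSemidef.dotProduct_mulVec_nonneg w
    simpa [hc] using this
  have hExp : ∀ s : ℝ, (v - s • w) ⬝ᵥ V.mulVec (v - s • w)
      = v ⬝ᵥ V.mulVec v - 2 * s * a + s ^ 2 * c := by
    intro s
    simp only [sub_dotProduct, dotProduct_sub, Matrix.mulVec_sub,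
      Matrix.mulVec_smul, smul_dotProduct, dotProduct_smul,
      smul_eq_mul, hsym, ← ha, ← hc]
    ring
  rw [hL, hL, hω'v, hExp] at hkey
  rw [hL, hL, hηv]
  have hη1 : X₁ - X₀.mulVec η = v - w := hηv
  have : (v - w) ⬝ᵥ V.mulVec (v - w) = v ⬝ᵥ V.mulVec v - 2 * 1 * a + 1 ^ 2 * c := by
    simpa using hExp 1
  rw [this]
  have h2a : 2 * a ≤ t * c := by
    have : 0 ≤ -(2 * t * a) + t ^ 2 * c := by linarith
    nlinarith
  nlinarith
end
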